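/- Let d > 1 and s ≥ 1 be integers and S a real s×s matrix with S^d = 0 and S^{d-1} ≠ 0. Let Q be the 2s×2s block matrix Q = [[0, Sᵀ],[S, Sᵀ - S]]. Then Q is nilpotent and Q^{d-1} ≠ 0. (Indeed Q = M R M^{-1} where M = [[I, I],[0, I]] and R = [[-S, 0],[S, Sᵀ]].) -/

import Mathlib

open Matrix

/-- powers of a block lower-triangular matrix stay block lower-triangular. -/
lemma lowerTri_pow {s : ℕ} (A C D : Matrix (Fin s) (Fin s) ℝ) (n : ℕ) :
    ∃ X, (Matrix.fromBlocks A 0 C D) ^ n = Matrix.fromBlocks (A ^ n) 0 X (D ^ n) := by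
  induction n with
  | zero => exact ⟨0, by simp [Matrix.fromBlocks_one]⟩
  | succ n ih =>
    obtain ⟨X, hX⟩ := ih
    refine ⟨X * A + D ^ n * C, ?_⟩
    rw [pow_succ, hX, Matrix.fromBlocks_multiply]
    simp [pow_succ]

/-- the block matrix `Q = [[0, Sᵀ],[S, Sᵀ - S]]` built from a `d`-step nilpotent
matrix `S` is nilpotent with `Q^{d-1} ≠ 0`. -/
theorem stmt14 (d s : ℕ) (hd : 1 < d) (hs : 1 ≤ s)
    (S : Matrix (Fin s) (Fin s) ℝ) (hSd : S ^ d = 0) (hSd1 : S ^ (d - 1) ≠ 0) :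
    IsNilpotent (Matrix.fromBlocks 0 Sᵀ S (Sᵀ - S)) ∧
    (Matrix.fromBlocks 0 Sᵀ S (Sᵀ - S)) ^ (d - 1) ≠ 0 := by
  set Q : Matrix (Fin s ⊕ Fin s) (Fin s ⊕ Fin s) ℝ :=
    Matrix.fromBlocks 0 Sᵀ S (Sᵀ - S) with hQ
  set M : Matrix (Fin s ⊕ Fin s) (Fin s ⊕ Fin s) ℝ := Matrix.fromBlocks 1 1 0 1 with hM
  set M' : Matrix (Fin s ⊕ Fin s) (Fin s ⊕ Fin s) ℝ := Matrix.fromBlocks 1 (-1) 0 1 with hM'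
  set R : Matrix (Fin s ⊕ Fin s) (Fin s ⊕ Fin s) ℝ := Matrix.fromBlocks (-S) 0 S Sᵀ with hR
  have hMM' : M * M' = 1 := by
    rw [hM, hM', Matrix.fromBlocks_multiply, ← Matrix.fromBlocks_one]
    congr 1 <;> simp
  have hM'M : M' * M = 1 := by
    rw [hM, hM', Matrix.fromBlocks_multiply, ← Matrix.fromBlocks_one]
    congr 1 <;> simp
  have hQMRM : Q = M * R * M' := by
    rw [hM, hM', hR, Matrix.fromBlocks_multiply, Matrix.fromBlocks_multiply, hQ]
    congr 1 <;> simp <;> simp [sub_eq_add_neg, add_comm]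
  have hQn : ∀ n, Q ^ n = M * R ^ n * M' := by
    intro n
    induction n with
    | zero => simp [hMM']
    | succ n ih =>
      rw [pow_succ, ih, hQMRM, pow_succ]
      simp only [← mul_assoc]
      rw [mul_assoc (M * R ^ n) M' M, hM'M, mul_one]
  have hTd : (Sᵀ) ^ d = 0 := by
    rw [← Matrix.transpose_pow, hSd, Matrix.transpose_zero]
  have hNd : (-S) ^ d = 0 := by
    rw [neg_pow, hSd, mul_zero]
  constructor
  · refine ⟨2 * d, ?_⟩
    rw [hQn]
    obtain ⟨X, hX⟩ := lowerTri_pow (-S) S Sᵀ d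
    have : R ^ (2 * d) = 0 := by
      rw [two_mul, pow_add, hX, hNd, hTd, Matrix.fromBlocks_multiply]
      simp
    rw [this]
    simp
  · intro h
    have hR0 : R ^ (d - 1) = 0 := by
      have := congrArg (fun A => M' * A * M) (hQn (d - 1))
      simp only [h] at this
      simp only [mul_zero, zero_mul, ← mul_assoc] at this
      rw [hM'M, one_mul, mul_assoc, hM'M, mul_one] at this
      exact this.symm
    obtain ⟨X, hX⟩ := lowerTri_pow (-S) S Sᵀ (d - 1)
    rw [hX] at hR0
    have h11 : (-S) ^ (d - 1) = 0 := by
      have := congrArg Matrix.toBlocks₁₁ hR0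
      have h0 : (0 : Matrix (Fin s ⊕ Fin s) (Fin s ⊕ Fin s) ℝ).toBlocks₁₁ = 0 := rfl
      simpa [Matrix.toBlocks_fromBlocks₁₁, h0] using this
    rw [neg_pow] at h11
    rcases Nat.even_or_odd (d - 1) with he | ho
    · rw [he.neg_one_pow, one_mul] at h11; exact hSd1 h11
    · rw [ho.neg_one_pow, neg_one_mul, neg_eq_zero] at h11; exact hSd1 h11
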